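/- Elasticity bound: Let G = (V,E,r) be a graph, let m ≥ 1 and D ≥ 1, and suppose that every connected component of G has at most m vertices (i.e., for every vertex v, the set of vertices joined to v by a walk of edges, including v itself, has cardinality at most m) and that every vertex has degree at most D. If an element a ∈ A(G) can be written both as a sum of k atoms and as a sum of l atoms, with k ≥ 1, then l·D ≤ (m·D − m + 1)·k. (In other words, the elasticity of A(G) is at most m − (m−1)/D.) -/

import Mathlib

/-- An agglomeration on the graph given by `r : E → Sym2 V`. -/
def IsAgg {V E : Type*} (r : E → Sym2 V) (a : (V → ℕ) × (E → ℕ)) : Prop :=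
  ∀ (e : E) (v : V), v ∈ r e → a.2 e ≤ a.1 v

/-- An atom of the monoid of agglomerations. -/
def IsAtomAgg {V E : Type*} (r : E → Sym2 V) (a : (V → ℕ) × (E → ℕ)) : Prop :=
  IsAgg r a ∧ a ≠ 0 ∧
    ∀ b c : (V → ℕ) × (E → ℕ), IsAgg r b → IsAgg r c → a = b + c → b = 0 ∨ c = 0

/-- `AggJoined r E' x y`: `x` and `y` are joined by a walk using only edges in `E'`. -/
def AggJoined {V E : Type*} (r : E → Sym2 V) (E' : Set E) : V → V → Prop :=
  Relation.ReflTransGen (fun x y => ∃ e ∈ E', r e = s(x, y))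

open Finset

set_option linter.unusedSectionVars false

section ElasticityAux
variable {V E : Type*} [DecidableEq E]

def AggReach (r : E → Sym2 V) (F : Finset E) : V → V → Prop :=
  Relation.ReflTransGen (fun x y => ∃ e ∈ F, r e = s(x, y))

lemma sym2_rep (z : Sym2 V) : ∃ x y, z = s(x, y) := z.ind (fun x y => ⟨x, y, rfl⟩)

lemma sym2_eq_of_mem {u v : V} {z : Sym2 V} (hu : u ∈ z) (hv : v ∈ z) (huv : u ≠ v) :
    z = s(u, v) := by
  obtain ⟨x, y, rfl⟩ := sym2_rep z
  rw [Sym2.mem_iff] at hu hv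
  rcases hu with rfl | rfl <;> rcases hv with rfl | rfl <;>
    first | exact absurd rfl huv | rfl | exact Sym2.eq_swap

lemma pairEqZeroIff {b : (V → ℕ) × (E → ℕ)} :
    b = 0 ↔ (∀ v, b.1 v = 0) ∧ (∀ e, b.2 e = 0) := by
  constructor
  · rintro rfl; simp
  · rintro ⟨h1, h2⟩
    exact Prod.ext (funext fun v => h1 v) (funext fun e => h2 e)

/-- In an atom all vertex values are at most 1. -/
lemma atom_vals_le_one {r : E → Sym2 V} {b : (V → ℕ) × (E → ℕ)}
    (hb : IsAtomAgg r b) : ∀ v, b.1 v ≤ 1 := by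
  obtain ⟨hagg, hne, hsplit⟩ := hb
  set c : (V → ℕ) × (E → ℕ) := (fun v => min (b.1 v) 1, fun e => min (b.2 e) 1) with hc
  set d : (V → ℕ) × (E → ℕ) :=
    (fun v => b.1 v - min (b.1 v) 1, fun e => b.2 e - min (b.2 e) 1) with hd
  have hcagg : IsAgg r c := fun e v hv => min_le_min (hagg e v hv) le_rfl
  have hdagg : IsAgg r d := fun e v hv => by have := hagg e v hv; simp [hd]; omega
  have hsum : b = c + d := by
    refine Prod.ext (funext fun v => ?_) (funext fun e => ?_) <;> simp [hc, hd] <;> omega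
  rcases hsplit c d hcagg hdagg hsum with h0 | h0
  · exfalso
    rw [pairEqZeroIff] at h0
    refine hne (pairEqZeroIff.mpr ⟨fun v => ?_, fun e => ?_⟩)
    · have := h0.1 v; simp [hc] at this; omega
    · obtain ⟨x, y, hxy⟩ := sym2_rep (r e)
      have hx : b.1 x = 0 := by have := h0.1 x; simp [hc] at this; omega
      have := hagg e x (by rw [hxy]; exact Sym2.mem_mk_left x y)
      omega
  · intro v
    rw [pairEqZeroIff] at h0
    have := h0.1 v
    simp [hd] at this
    omega

lemma atom_edge_vals_le_one {r : E → Sym2 V} {b : (V → ℕ) × (E → ℕ)}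
    (hb : IsAtomAgg r b) : ∀ e, b.2 e ≤ 1 := by
  intro e
  obtain ⟨x, y, hxy⟩ := sym2_rep (r e)
  have := hb.1 e x (by rw [hxy]; exact Sym2.mem_mk_left x y)
  have := atom_vals_le_one hb x
  omega

/-- The support of an atom is connected via positive edges. -/
lemma atom_support_connected [Fintype E] {r : E → Sym2 V} {b : (V → ℕ) × (E → ℕ)}
    (hb : IsAtomAgg r b) [DecidablePred fun e => 1 ≤ b.2 e] {v0 : V} (h0 : 1 ≤ b.1 v0) :
    ∀ w, 1 ≤ b.1 w → AggReach r (univ.filter fun e => 1 ≤ b.2 e) v0 w := by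
  obtain ⟨hagg, hne, hsplit⟩ := hb
  classical
  set F : Finset E := univ.filter fun e => 1 ≤ b.2 e with hF
  set S : V → Prop := AggReach r F v0 with hS
  -- the restriction of b to the reachable part
  set c : (V → ℕ) × (E → ℕ) :=
    (fun v => if S v then b.1 v else 0, fun e => if ∃ u ∈ r e, S u then b.2 e else 0) with hc
  set d : (V → ℕ) × (E → ℕ) :=
    (fun v => if S v then 0 else b.1 v, fun e => if ∃ u ∈ r e, S u then 0 else b.2 e) with hd
  have key : ∀ (e : E) (v : V), v ∈ r e → (∃ u ∈ r e, S u) → ¬ S v → b.2 e = 0 := by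
    intro e v hv ⟨u, hu, hSu⟩ hnv
    by_contra hpos
    have huv : u ≠ v := fun h => hnv (h ▸ hSu)
    have hre : r e = s(u, v) := sym2_eq_of_mem hu hv huv
    exact hnv (hSu.tail ⟨e, by simp [hF]; omega, hre⟩)
  have hcagg : IsAgg r c := by
    intro e v hv
    simp only [hc]
    split
    · split
      · exact hagg e v hv
      · next hcond hnv => rw [key e v hv hcond hnv]
    · exact Nat.zero_le _
  have hdagg : IsAgg r d := by
    intro e v hv
    simp only [hd]
    split
    · exact Nat.zero_le _
    · next hcond =>
      split
      · next hSv => exact absurd ⟨v, hv, hSv⟩ hcond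
      · exact hagg e v hv
  have hsum : b = c + d := by
    refine Prod.ext (funext fun v => ?_) (funext fun e => ?_) <;> simp [hc, hd] <;> split <;> simp
  rcases hsplit c d hcagg hdagg hsum with h0' | h0'
  · exfalso
    rw [pairEqZeroIff] at h0'
    have := h0'.1 v0
    simp [hc] at this
    have hSv0 : S v0 := Relation.ReflTransGen.refl
    have := this hSv0
    omega
  · intro w hw
    rw [pairEqZeroIff] at h0'
    have := h0'.1 w
    simp [hd] at this
    by_contra hnS
    have := this hnS
    omega

/-- Conversely, everything reachable from a support vertex is in the support. -/
lemma reach_mem_support {r : E → Sym2 V} {b : (V → ℕ) × (E → ℕ)} (hagg : IsAgg r b)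
    [Fintype E] [DecidablePred fun e => 1 ≤ b.2 e] {v0 : V} (h0 : 1 ≤ b.1 v0) :
    ∀ w, AggReach r (univ.filter fun e => 1 ≤ b.2 e) v0 w → 1 ≤ b.1 w := by
  intro w hw
  induction hw with
  | refl => exact h0
  | tail h step ih =>
    obtain ⟨e, he, hre⟩ := step
    simp at he
    have := hagg e _ (by rw [hre]; exact Sym2.mem_mk_right _ _)
    omega

lemma aggReach_symm {r : E → Sym2 V} {F : Finset E} {x y : V}
    (h : AggReach r F x y) : AggReach r F y x := by
  refine (@Relation.ReflTransGen.symmetric _ _ ⟨?_⟩).symm _ _ h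
  rintro u v ⟨e, he, hre⟩
  exact ⟨e, he, by rw [hre, Sym2.eq_swap]⟩

lemma aggReach_mono {r : E → Sym2 V} {F G : Finset E} (hFG : F ⊆ G) {x y : V}
    (h : AggReach r F x y) : AggReach r G x y :=
  Relation.ReflTransGen.mono (r := fun x y => ∃ e ∈ F, r e = s(x, y))
    (p := fun x y => ∃ e ∈ G, r e = s(x, y)) (fun _ _ ⟨e, he, hre⟩ => ⟨e, hFG he, hre⟩) _ _ h

lemma aggReach_decomp {r : E → Sym2 V} {F : Finset E} {e : E} {x y : V}
    (hxy : r e = s(x, y)) {a : V} :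
    ∀ w, AggReach r F a w → AggReach r (F.erase e) a w ∨
      ((AggReach r (F.erase e) a x ∨ AggReach r (F.erase e) a y) ∧
       (AggReach r (F.erase e) x w ∨ AggReach r (F.erase e) y w)) := by
  intro w h
  induction h with
  | refl => exact Or.inl Relation.ReflTransGen.refl
  | @tail z w' hz step ih =>
    obtain ⟨e', he', hre'⟩ := step
    by_cases hee : e' = e
    · subst hee
      rw [hxy] at hre'
      have hcase : (x = z ∧ y = w') ∨ (x = w' ∧ y = z) := Sym2.eq_iff.mp hre'
      rcases hcase with ⟨rfl, rfl⟩ | ⟨rfl, rfl⟩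
      · rcases ih with h' | ⟨h1, _⟩
        · exact Or.inr ⟨Or.inl h', Or.inr Relation.ReflTransGen.refl⟩
        · exact Or.inr ⟨h1, Or.inr Relation.ReflTransGen.refl⟩
      · rcases ih with h' | ⟨h1, _⟩
        · exact Or.inr ⟨Or.inr h', Or.inl Relation.ReflTransGen.refl⟩
        · exact Or.inr ⟨h1, Or.inl Relation.ReflTransGen.refl⟩
    · have step' : ∃ e'' ∈ F.erase e, r e'' = s(z, w') :=
        ⟨e', Finset.mem_erase.mpr ⟨hee, he'⟩, hre'⟩
      rcases ih with h' | ⟨h1, h2⟩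
      · exact Or.inl (h'.tail step')
      · exact Or.inr ⟨h1, h2.imp (·.tail step') (·.tail step')⟩

lemma aggReach_erase_of_not_reach {r : E → Sym2 V} {F : Finset E} {e : E} {v0 u : V}
    (hu : u ∈ r e) (hnu : ¬ AggReach r F v0 u) :
    ∀ w, AggReach r F v0 w → AggReach r (F.erase e) v0 w := by
  intro w h
  induction h with
  | refl => exact Relation.ReflTransGen.refl
  | @tail z w' hz step ih =>
    obtain ⟨e', he', hre'⟩ := step
    by_cases hee : e' = e
    · exfalso
      subst hee
      rw [hre', Sym2.mem_iff] at hu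
      rcases hu with rfl | rfl
      · exact hnu hz
      · exact hnu (hz.tail ⟨e', he', hre'⟩)
    · exact ih.tail ⟨e', Finset.mem_erase.mpr ⟨hee, he'⟩, hre'⟩

lemma aggReach_erase_of_both {r : E → Sym2 V} {F : Finset E} {e : E} {x y v0 : V}
    (hxy : r e = s(x, y)) (hx : AggReach r (F.erase e) v0 x)
    (hy : AggReach r (F.erase e) v0 y) :
    ∀ w, AggReach r F v0 w → AggReach r (F.erase e) v0 w := by
  intro w h
  induction h with
  | refl => exact Relation.ReflTransGen.refl
  | @tail z w' hz step ih =>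
    obtain ⟨e', he', hre'⟩ := step
    by_cases hee : e' = e
    · subst hee
      rw [hxy] at hre'
      rcases Sym2.eq_iff.mp hre' with ⟨rfl, rfl⟩ | ⟨rfl, rfl⟩
      · exact hy
      · exact hx
    · exact ih.tail ⟨e', Finset.mem_erase.mpr ⟨hee, he'⟩, hre'⟩

variable [Fintype V]

open Classical in
private lemma reach_card_helper {r : E → Sym2 V} {F : Finset E} {e : E} {x y v0 : V}
    (IH : ∀ G ⊂ F, ∀ v : V, (univ.filter fun w => AggReach r G v w).card ≤
        (G.filter fun e' => ∀ u ∈ r e', AggReach r G v u).card + 1)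
    (he : e ∈ F) (hxy : r e = s(x, y))
    (hall : ∀ e' ∈ F, ∀ u ∈ r e', AggReach r F v0 u)
    (hx' : AggReach r (F.erase e) v0 x) (hy' : ¬ AggReach r (F.erase e) v0 y) :
    (univ.filter fun w => AggReach r F v0 w).card ≤
      (F.filter fun e' => ∀ u ∈ r e', AggReach r F v0 u).card + 1 := by
  set F' := F.erase e with hF'
  have hsub : F' ⊂ F := Finset.erase_ssubset he
  have hyF : AggReach r F v0 y := hall e he y (by rw [hxy]; exact Sym2.mem_mk_right x y)
  set S : Finset V := univ.filter fun w => AggReach r F v0 w with hS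
  set S' : Finset V := univ.filter fun w => AggReach r F' v0 w with hS'
  set T : Finset V := univ.filter fun w => AggReach r F' y w with hT
  have hST : S ⊆ S' ∪ T := by
    intro w hw
    rw [hS, Finset.mem_filter] at hw
    rcases aggReach_decomp hxy w hw.2 with h' | ⟨_, h2⟩
    · exact Finset.mem_union_left _ (by simp only [hS', Finset.mem_filter, Finset.mem_univ, true_and]; exact h')
    · rcases h2 with h2 | h2
      · exact Finset.mem_union_left _
          (Finset.mem_filter.mpr ⟨Finset.mem_univ w, Relation.ReflTransGen.trans hx' h2⟩)
      · exact Finset.mem_union_right _ (by simp only [hT, Finset.mem_filter, Finset.mem_univ, true_and]; exact h2)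
  have hdisj : Disjoint S' T := by
    rw [Finset.disjoint_left]
    intro z hz1 hz2
    rw [hS', Finset.mem_filter] at hz1
    rw [hT, Finset.mem_filter] at hz2
    exact hy' (hz1.2.trans (aggReach_symm hz2.2))
  set W1 : Finset E := F'.filter fun e' => ∀ u ∈ r e', AggReach r F' v0 u with hW1
  set W2 : Finset E := F'.filter fun e' => ∀ u ∈ r e', AggReach r F' y u with hW2
  have hIH1 : S'.card ≤ W1.card + 1 := IH F' hsub v0
  have hIH2 : T.card ≤ W2.card + 1 := IH F' hsub y
  have hdisjW : Disjoint W1 W2 := by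
    rw [Finset.disjoint_left]
    intro e'' h1 h2
    rw [hW1, Finset.mem_filter] at h1
    rw [hW2, Finset.mem_filter] at h2
    obtain ⟨p, q, hpq⟩ := sym2_rep (r e'')
    have hp : p ∈ r e'' := by rw [hpq]; exact Sym2.mem_mk_left p q
    exact hy' ((h1.2 p hp).trans (aggReach_symm (h2.2 p hp)))
  have heW : e ∉ W1 ∪ W2 := by
    intro h
    rcases Finset.mem_union.mp h with h | h
    · exact (Finset.notMem_erase e F) (Finset.filter_subset _ _ h)
    · exact (Finset.notMem_erase e F) (Finset.filter_subset _ _ h)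
  have hWsub : insert e (W1 ∪ W2) ⊆ F.filter fun e' => ∀ u ∈ r e', AggReach r F v0 u := by
    intro e'' h
    rcases Finset.mem_insert.mp h with rfl | h
    · exact Finset.mem_filter.mpr ⟨he, hall e'' he⟩
    · rcases Finset.mem_union.mp h with h | h
      · rw [hW1, Finset.mem_filter] at h
        exact Finset.mem_filter.mpr ⟨Finset.mem_of_mem_erase h.1,
          fun u hu => aggReach_mono (Finset.erase_subset e F) (h.2 u hu)⟩
      · rw [hW2, Finset.mem_filter] at h
        refine Finset.mem_filter.mpr ⟨Finset.mem_of_mem_erase h.1, fun u hu => ?_⟩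
        exact hyF.trans (aggReach_mono (Finset.erase_subset e F) (h.2 u hu))
  have hcard1 : W1.card + W2.card + 1 ≤
      (F.filter fun e' => ∀ u ∈ r e', AggReach r F v0 u).card := by
    have h1 : (insert e (W1 ∪ W2)).card = W1.card + W2.card + 1 := by
      rw [Finset.card_insert_of_notMem heW, Finset.card_union_of_disjoint hdisjW]
    calc W1.card + W2.card + 1 = (insert e (W1 ∪ W2)).card := h1.symm
      _ ≤ _ := Finset.card_le_card hWsub
  calc S.card ≤ (S' ∪ T).card := Finset.card_le_card hST
    _ = S'.card + T.card := Finset.card_union_of_disjoint hdisj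
    _ ≤ (W1.card + 1) + (W2.card + 1) := Nat.add_le_add hIH1 hIH2
    _ = (W1.card + W2.card + 1) + 1 := by ring
    _ ≤ _ := Nat.add_le_add_right hcard1 1

open Classical in
lemma reach_card (r : E → Sym2 V) :
    ∀ (F : Finset E) (v0 : V),
      (univ.filter fun w => AggReach r F v0 w).card ≤
        (F.filter fun e' => ∀ u ∈ r e', AggReach r F v0 u).card + 1 := by
  intro F
  induction F using Finset.strongInduction with
  | _ F IH =>
  intro v0
  by_cases hall : ∀ e' ∈ F, ∀ u ∈ r e', AggReach r F v0 u
  · rcases Finset.eq_empty_or_nonempty F with rfl | ⟨e, he⟩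
    · have hsingle : (univ.filter fun w => AggReach r (∅ : Finset E) v0 w) ⊆ {v0} := by
        intro w hw
        rw [Finset.mem_filter] at hw
        have : w = v0 := by
          induction hw.2 with
          | refl => rfl
          | tail _ step _ => exact absurd step.choose_spec.1 (Finset.notMem_empty _)
        simp [this]
      calc (univ.filter fun w => AggReach r (∅ : Finset E) v0 w).card
          ≤ ({v0} : Finset V).card := Finset.card_le_card hsingle
        _ = 1 := Finset.card_singleton v0
        _ ≤ _ := Nat.le_add_left 1 _
    · obtain ⟨x, y, hxy⟩ := sym2_rep (r e)
      by_cases hsame : ∀ w, AggReach r F v0 w → AggReach r (F.erase e) v0 w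
      · -- the erased graph has the same reach set
        have hset : (univ.filter fun w => AggReach r F v0 w) =
            (univ.filter fun w => AggReach r (F.erase e) v0 w) := by
          ext w
          simp only [Finset.mem_filter, Finset.mem_univ, true_and]
          exact ⟨hsame w, aggReach_mono (Finset.erase_subset e F)⟩
        have hsub : (F.erase e).filter (fun e' => ∀ u ∈ r e', AggReach r (F.erase e) v0 u)
            ⊆ (F.filter fun e' => ∀ u ∈ r e', AggReach r F v0 u).erase e := by
          intro e'' h
          rw [Finset.mem_filter] at h
          refine Finset.mem_erase.mpr ⟨Finset.ne_of_mem_erase h.1, Finset.mem_filter.mpr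
            ⟨Finset.mem_of_mem_erase h.1,
             fun u hu => aggReach_mono (Finset.erase_subset e F) (h.2 u hu)⟩⟩
        have heF : e ∈ F.filter fun e' => ∀ u ∈ r e', AggReach r F v0 u :=
          Finset.mem_filter.mpr ⟨he, hall e he⟩
        have hcard : ((F.filter fun e' => ∀ u ∈ r e', AggReach r F v0 u).erase e).card + 1 =
            (F.filter fun e' => ∀ u ∈ r e', AggReach r F v0 u).card := by
          rw [Finset.card_erase_of_mem heF]
          have : 1 ≤ (F.filter fun e' => ∀ u ∈ r e', AggReach r F v0 u).card :=
            Finset.card_pos.mpr ⟨e, heF⟩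
          omega
        calc (univ.filter fun w => AggReach r F v0 w).card
            = (univ.filter fun w => AggReach r (F.erase e) v0 w).card := by rw [hset]
          _ ≤ ((F.erase e).filter
                (fun e' => ∀ u ∈ r e', AggReach r (F.erase e) v0 u)).card + 1 :=
              IH (F.erase e) (Finset.erase_ssubset he) v0
          _ ≤ ((F.filter fun e' => ∀ u ∈ r e', AggReach r F v0 u).erase e).card + 1 :=
              Nat.add_le_add_right (Finset.card_le_card hsub) 1
          _ = (F.filter fun e' => ∀ u ∈ r e', AggReach r F v0 u).card := hcard
          _ ≤ _ := Nat.le_succ _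
      · push_neg at hsame
        obtain ⟨w0, hw0, hnw0⟩ := hsame
        have hxyS : AggReach r (F.erase e) v0 x ∨ AggReach r (F.erase e) v0 y := by
          rcases aggReach_decomp hxy w0 hw0 with h' | ⟨h1, _⟩
          · exact absurd h' hnw0
          · exact h1
        rcases hxyS with hX | hY
        · by_cases hY : AggReach r (F.erase e) v0 y
          · exact absurd (aggReach_erase_of_both hxy hX hY w0 hw0) hnw0
          · exact reach_card_helper IH he hxy hall hX hY
        · by_cases hX : AggReach r (F.erase e) v0 x
          · exact absurd (aggReach_erase_of_both hxy hX hY w0 hw0) hnw0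
          · exact reach_card_helper IH he (hxy.trans Sym2.eq_swap) hall hY hX
  · push_neg at hall
    obtain ⟨e, he, u, hu, hnu⟩ := hall
    have hset : (univ.filter fun w => AggReach r F v0 w) =
        (univ.filter fun w => AggReach r (F.erase e) v0 w) := by
      ext w
      simp only [Finset.mem_filter, Finset.mem_univ, true_and]
      exact ⟨aggReach_erase_of_not_reach hu hnu w, aggReach_mono (Finset.erase_subset e F)⟩
    have hsub : (F.erase e).filter (fun e' => ∀ u' ∈ r e', AggReach r (F.erase e) v0 u')
        ⊆ F.filter fun e' => ∀ u' ∈ r e', AggReach r F v0 u' := by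
      intro e'' h
      rw [Finset.mem_filter] at h
      exact Finset.mem_filter.mpr ⟨Finset.mem_of_mem_erase h.1,
        fun u' hu' => aggReach_mono (Finset.erase_subset e F) (h.2 u' hu')⟩
    calc (univ.filter fun w => AggReach r F v0 w).card
        = (univ.filter fun w => AggReach r (F.erase e) v0 w).card := by rw [hset]
      _ ≤ ((F.erase e).filter
            (fun e' => ∀ u' ∈ r e', AggReach r (F.erase e) v0 u')).card + 1 :=
          IH (F.erase e) (Finset.erase_ssubset he) v0
      _ ≤ _ := Nat.add_le_add_right (Finset.card_le_card hsub) 1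


open Classical in
lemma agg_lower {V E : Type*} [Fintype V] [Fintype E] (r : E → Sym2 V)
    (hr : ∀ e : E, ¬ (r e).IsDiag) (D : ℕ)
    (hdeg : ∀ v : V, (univ.filter fun e => v ∈ r e).card ≤ D)
    (b : (V → ℕ) × (E → ℕ)) (hagg : IsAgg r b) (hne : b ≠ 0) :
    (∑ e, b.2 e) + D ≤ D * ∑ v, b.1 v := by
  classical
  have hcard2 : ∀ e : E, (univ.filter fun v => v ∈ r e).card = 2 := by
    intro e
    obtain ⟨x, y, hxy⟩ := sym2_rep (r e)
    have hne' : x ≠ y := by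
      have := hr e; rw [hxy] at this; simpa [Sym2.mk_isDiag_iff] using this
    have hset : (univ.filter fun v => v ∈ r e) = {x, y} := by
      ext v; simp [hxy, Sym2.mem_iff]
    rw [hset, Finset.card_pair hne']
  have hdouble : 2 * ∑ e, b.2 e ≤ D * ∑ v, b.1 v := by
    have h1 : ∑ e : E, ∑ v : V, (if v ∈ r e then b.2 e else 0) = 2 * ∑ e, b.2 e := by
      rw [Finset.mul_sum]
      refine Finset.sum_congr rfl fun e _ => ?_
      rw [← Finset.sum_filter, Finset.sum_const, smul_eq_mul, hcard2 e]
    have h2 : ∀ v : V, ∑ e : E, (if v ∈ r e then b.2 e else 0) ≤ D * b.1 v := by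
      intro v
      rw [← Finset.sum_filter]
      calc ∑ e ∈ univ.filter (fun e => v ∈ r e), b.2 e
          ≤ ∑ e ∈ univ.filter (fun e => v ∈ r e), b.1 v :=
            Finset.sum_le_sum fun e he => hagg e v (Finset.mem_filter.mp he).2
        _ = (univ.filter fun e => v ∈ r e).card * b.1 v := by
            rw [Finset.sum_const, smul_eq_mul]
        _ ≤ D * b.1 v := Nat.mul_le_mul_right _ (hdeg v)
    calc 2 * ∑ e, b.2 e = ∑ e : E, ∑ v : V, (if v ∈ r e then b.2 e else 0) := h1.symm
      _ = ∑ v : V, ∑ e : E, (if v ∈ r e then b.2 e else 0) := Finset.sum_comm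
      _ ≤ ∑ v : V, D * b.1 v := Finset.sum_le_sum fun v _ => h2 v
      _ = D * ∑ v, b.1 v := (Finset.mul_sum _ _ _).symm
  have hV1 : 1 ≤ ∑ v, b.1 v := by
    rcases Nat.eq_zero_or_pos (∑ v, b.1 v) with h0 | h
    · exfalso
      have hv : ∀ v, b.1 v = 0 := fun v =>
        Finset.sum_eq_zero_iff.mp h0 v (Finset.mem_univ v)
      refine hne (pairEqZeroIff.mpr ⟨hv, fun e => ?_⟩)
      obtain ⟨x, y, hxy⟩ := sym2_rep (r e)
      have := hagg e x (by rw [hxy]; exact Sym2.mem_mk_left x y)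
      have := hv x; omega
    · exact h
  rcases eq_or_lt_of_le hV1 with h1 | h2
  · have hE0 : ∀ e, b.2 e = 0 := by
      intro e
      by_contra hpos
      obtain ⟨x, y, hxy⟩ := sym2_rep (r e)
      have hxyne : x ≠ y := by
        have := hr e; rw [hxy] at this; simpa [Sym2.mk_isDiag_iff] using this
      have hx := hagg e x (by rw [hxy]; exact Sym2.mem_mk_left x y)
      have hy := hagg e y (by rw [hxy]; exact Sym2.mem_mk_right x y)
      have hle : ∑ v ∈ ({x, y} : Finset V), b.1 v ≤ ∑ v, b.1 v :=
        Finset.sum_le_sum_of_subset (Finset.subset_univ _)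
      rw [Finset.sum_pair hxyne] at hle
      omega
    have hEsum : ∑ e, b.2 e = 0 := Finset.sum_eq_zero fun e _ => hE0 e
    rw [hEsum, ← h1, Nat.mul_one]
    omega
  · have h2D : 2 * D ≤ D * ∑ v, b.1 v := by
      calc 2 * D = D * 2 := Nat.mul_comm 2 D
        _ ≤ D * ∑ v, b.1 v := Nat.mul_le_mul_left D h2
    omega

open Classical in
lemma atom_upper {V E : Type*} [Fintype V] [Fintype E] (r : E → Sym2 V)
    (m D : ℕ) (hD : 1 ≤ D)
    (hcomp : ∀ v : V, (univ.filter fun w => AggJoined r Set.univ v w).card ≤ m)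
    (b : (V → ℕ) × (E → ℕ)) (hb : IsAtomAgg r b) :
    D * ∑ v, b.1 v ≤ m * (D - 1) + 1 + ∑ e, b.2 e := by
  classical
  obtain ⟨v0, hv0⟩ : ∃ v0, 1 ≤ b.1 v0 := by
    by_contra h
    push_neg at h
    refine hb.2.1 (pairEqZeroIff.mpr ⟨fun v => by have := h v; omega, fun e => ?_⟩)
    obtain ⟨x, y, hxy⟩ := sym2_rep (r e)
    have := hb.1 e x (by rw [hxy]; exact Sym2.mem_mk_left x y)
    have := h x; omega
  set F : Finset E := univ.filter (fun e => 1 ≤ b.2 e) with hF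
  set Supp : Finset V := univ.filter (fun v => 1 ≤ b.1 v) with hSupp
  have hVsum : ∑ v, b.1 v = Supp.card := by
    have h' : ∀ v : V, b.1 v = if 1 ≤ b.1 v then 1 else 0 := fun v => by
      have := atom_vals_le_one hb v; split <;> omega
    rw [Finset.sum_congr rfl fun v _ => h' v, ← Finset.sum_filter, Finset.sum_const,
      smul_eq_mul, mul_one]
  have hEsum : ∑ e, b.2 e = F.card := by
    have h' : ∀ e : E, b.2 e = if 1 ≤ b.2 e then 1 else 0 := fun e => by
      have := atom_edge_vals_le_one hb e; split <;> omega
    rw [Finset.sum_congr rfl fun e _ => h' e, ← Finset.sum_filter, Finset.sum_const,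
      smul_eq_mul, mul_one]
  have hsuppeq : Supp = univ.filter fun w => AggReach r F v0 w := by
    ext w
    simp only [hSupp, Finset.mem_filter, Finset.mem_univ, true_and]
    exact ⟨fun hw => atom_support_connected hb hv0 w hw,
      fun hw => reach_mem_support hb.1 hv0 w hw⟩
  have hcount : Supp.card ≤ F.card + 1 := by
    rw [hsuppeq]
    calc (univ.filter fun w => AggReach r F v0 w).card
        ≤ (F.filter fun e' => ∀ u ∈ r e', AggReach r F v0 u).card + 1 := reach_card r F v0
      _ ≤ F.card + 1 := Nat.add_le_add_right (Finset.card_filter_le _ _) 1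
  have hcm : Supp.card ≤ m := by
    have hsub : Supp ⊆ univ.filter fun w => AggJoined r Set.univ v0 w := by
      intro w hw
      rw [hsuppeq, Finset.mem_filter] at hw
      refine Finset.mem_filter.mpr ⟨Finset.mem_univ w, ?_⟩
      exact Relation.ReflTransGen.mono (r := fun x y => ∃ e ∈ F, r e = s(x, y))
        (p := fun x y => ∃ e ∈ (Set.univ : Set E), r e = s(x, y))
        (fun x y hstep => by
          obtain ⟨e, _, hre⟩ := hstep
          exact ⟨e, Set.mem_univ e, hre⟩) _ _ hw.2
    exact le_trans (Finset.card_le_card hsub) (hcomp v0)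
  rw [hVsum, hEsum]
  have hsplit : D * Supp.card = (D - 1) * Supp.card + Supp.card := by
    obtain ⟨d, rfl⟩ : ∃ d, D = d + 1 := ⟨D - 1, by omega⟩
    simp [Nat.succ_mul]
  rw [hsplit]
  calc (D - 1) * Supp.card + Supp.card
      ≤ (D - 1) * m + (F.card + 1) :=
        Nat.add_le_add (Nat.mul_le_mul_left _ hcm) hcount
    _ = m * (D - 1) + 1 + F.card := by ring

end ElasticityAux

/-- **Elasticity bound**: if every connected component of `G` has at most `m` vertices and
every vertex has degree at most `D`, and `a ∈ A(G)` is both a sum of `k ≥ 1` atoms and a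
sum of `l` atoms, then `l·D ≤ (m·D − m + 1)·k`; i.e. `ρ(A(G)) ≤ m − (m−1)/D`. -/
theorem elasticity_bound {V E : Type*} [Fintype V] [Fintype E]
    (r : E → Sym2 V) (hr : ∀ e : E, ¬ (r e).IsDiag)
    (m D : ℕ) (hm : 1 ≤ m) (hD : 1 ≤ D)
    (hcomp : ∀ v : V, Nat.card {w : V // AggJoined r Set.univ v w} ≤ m)
    (hdeg : ∀ v : V, Nat.card {e : E // v ∈ r e} ≤ D)
    (a : (V → ℕ) × (E → ℕ)) (ha : IsAgg r a)
    (k l : ℕ) (hk : 1 ≤ k)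
    (hka : ∃ b : Fin k → (V → ℕ) × (E → ℕ), (∀ i, IsAtomAgg r (b i)) ∧ a = ∑ i, b i)
    (hla : ∃ c : Fin l → (V → ℕ) × (E → ℕ), (∀ i, IsAtomAgg r (c i)) ∧ a = ∑ i, c i) :
    l * D ≤ (m * D - m + 1) * k := by
  classical
  obtain ⟨b, hb, hab⟩ := hka
  obtain ⟨c, hc, hac⟩ := hla
  have hcomp' : ∀ v : V, (univ.filter fun w => AggJoined r Set.univ v w).card ≤ m := by
    intro v
    have := hcomp v
    rwa [Nat.card_eq_fintype_card, Fintype.card_subtype] at this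
  have hdeg' : ∀ v : V, (univ.filter fun e => v ∈ r e).card ≤ D := by
    intro v
    have := hdeg v
    rwa [Nat.card_eq_fintype_card, Fintype.card_subtype] at this
  have hVsum : ∀ (n : ℕ) (f : Fin n → (V → ℕ) × (E → ℕ)),
      (∑ v, (∑ i, f i).1 v) = ∑ i, ∑ v, (f i).1 v := by
    intro n f
    simp only [Prod.fst_sum, Finset.sum_apply]
    exact Finset.sum_comm
  have hEsumP : ∀ (n : ℕ) (f : Fin n → (V → ℕ) × (E → ℕ)),
      (∑ e, (∑ i, f i).2 e) = ∑ i, ∑ e, (f i).2 e := by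
    intro n f
    simp only [Prod.snd_sum, Finset.sum_apply]
    exact Finset.sum_comm
  have hup : D * ∑ v, a.1 v ≤ (m * (D - 1) + 1) * k + ∑ e, a.2 e := by
    rw [hab, hVsum k b, hEsumP k b]
    calc D * ∑ i, ∑ v, (b i).1 v = ∑ i, D * ∑ v, (b i).1 v := Finset.mul_sum _ _ _
      _ ≤ ∑ i : Fin k, (m * (D - 1) + 1 + ∑ e, (b i).2 e) :=
          Finset.sum_le_sum fun i _ => atom_upper r m D hD hcomp' (b i) (hb i)
      _ = (m * (D - 1) + 1) * k + ∑ i, ∑ e, (b i).2 e := by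
          rw [Finset.sum_add_distrib, Finset.sum_const, Finset.card_univ,
            Fintype.card_fin, smul_eq_mul, Nat.mul_comm]
  have hlow : (∑ e, a.2 e) + l * D ≤ D * ∑ v, a.1 v := by
    rw [hac, hVsum l c, hEsumP l c]
    calc (∑ i, ∑ e, (c i).2 e) + l * D = ∑ i : Fin l, ((∑ e, (c i).2 e) + D) := by
          rw [Finset.sum_add_distrib, Finset.sum_const, Finset.card_univ,
            Fintype.card_fin, smul_eq_mul]
      _ ≤ ∑ i, D * ∑ v, (c i).1 v :=
          Finset.sum_le_sum fun i _ => agg_lower r hr D hdeg' (c i) (hc i).1 (hc i).2.1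
      _ = D * ∑ i, ∑ v, (c i).1 v := (Finset.mul_sum _ _ _).symm
  have hrw : m * D - m + 1 = m * (D - 1) + 1 := by
    obtain ⟨d, rfl⟩ : ∃ d, D = d + 1 := ⟨D - 1, by omega⟩
    rw [Nat.mul_add]
    simp
  rw [hrw]
  have h3 : (∑ e, a.2 e) + l * D ≤ (m * (D - 1) + 1) * k + ∑ e, a.2 e :=
    le_trans hlow hup
  rw [Nat.add_comm ((m * (D - 1) + 1) * k)] at h3
  exact Nat.le_of_add_le_add_left h3
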